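/- Let A be a bounded self-adjoint operator on a Hilbert space H and let {j_α}_{α∈ℕ} be bounded self-adjoint operators with ∑_α j_α² = Id (converging weakly). Then for every φ ∈ H, ∑_α ‖A j_α φ‖² ≤ 2‖Aφ‖² + ⟨φ, Cφ⟩ where C = -2 ∑_α [A, j_α]² and [A,j] = Aj - jA. -/

import Mathlib

open scoped InnerProductSpace

theorem partition_of_unity_estimate
    {E : Type*} [NormedAddCommGroup E] [InnerProductSpace ℂ E] [CompleteSpace E]
    (A : E →L[ℂ] E) (hA : IsSelfAdjoint A)
    (j : ℕ → E →L[ℂ] E) (hj : ∀ α, IsSelfAdjoint (j α))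
    (hsum : ∀ φ ψ : E, HasSum (fun α => ⟪ψ, (j α * j α) φ⟫_ℂ) ⟪ψ, φ⟫_ℂ)
    (C : E →L[ℂ] E)
    (hC : ∀ φ ψ : E,
      HasSum (fun α => (-2 : ℂ) *
        ⟪ψ, ((A * j α - j α * A) * (A * j α - j α * A)) φ⟫_ℂ) ⟪ψ, C φ⟫_ℂ)
    (φ : E) :
    ∑' α, ‖A (j α φ)‖ ^ 2 ≤ 2 * ‖A φ‖ ^ 2 + (⟪φ, C φ⟫_ℂ).re := by
  set B : ℕ → E →L[ℂ] E := fun α => A * j α - j α * A with hBdef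
  -- adjoint of B α is -(B α)
  have hBstar : ∀ α, ContinuousLinearMap.adjoint (B α) = -(B α) := by
    intro α
    rw [← ContinuousLinearMap.star_eq_adjoint]
    simp only [hBdef, star_sub, star_mul, hA.star_eq, (hj α).star_eq, neg_sub]
  -- first sum: ∑ ‖j α (A φ)‖² = ‖A φ‖²
  have h1 : HasSum (fun α => ‖j α (A φ)‖ ^ 2) (‖A φ‖ ^ 2) := by
    have := (hsum (A φ) (A φ)).mapL Complex.reCLM
    convert this using 2 with α
    · have : ⟪A φ, (j α * j α) (A φ)⟫_ℂ = ⟪j α (A φ), j α (A φ)⟫_ℂ := by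
        rw [ContinuousLinearMap.mul_apply,
          ← ContinuousLinearMap.adjoint_inner_left, (hj α).adjoint_eq]
      rw [this]
      simp [inner_self_eq_norm_sq_to_K, ← Complex.ofReal_pow]
    · simp [inner_self_eq_norm_sq_to_K, ← Complex.ofReal_pow]
  -- second sum: ∑ 2‖B α φ‖² = Re ⟪φ, C φ⟫
  have h2 : HasSum (fun α => 2 * ‖B α φ‖ ^ 2) ((⟪φ, C φ⟫_ℂ).re) := by
    have := (hC φ φ).mapL Complex.reCLM
    convert this using 2 with α
    have hterm : ⟪φ, (B α * B α) φ⟫_ℂ = -(‖B α φ‖ ^ 2 : ℂ) := by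
      rw [ContinuousLinearMap.mul_apply,
        ← ContinuousLinearMap.adjoint_inner_left, hBstar α]
      simp [inner_self_eq_norm_sq_to_K]
    simp only [hBdef] at hterm ⊢
    rw [hterm]
    simp [← Complex.ofReal_pow]
    simp
  -- pointwise estimate
  have h3 : ∀ α, ‖A (j α φ)‖ ^ 2 ≤ 2 * ‖j α (A φ)‖ ^ 2 + 2 * ‖B α φ‖ ^ 2 := by
    intro α
    have hdecomp : A (j α φ) = j α (A φ) + B α φ := by
      simp [hBdef]
    have htri : ‖A (j α φ)‖ ≤ ‖j α (A φ)‖ + ‖B α φ‖ := by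
      rw [hdecomp]; exact norm_add_le _ _
    have hsq : ‖A (j α φ)‖ ^ 2 ≤ (‖j α (A φ)‖ + ‖B α φ‖) ^ 2 :=
      pow_le_pow_left₀ (norm_nonneg _) htri 2
    nlinarith [sq_nonneg (‖j α (A φ)‖ - ‖B α φ‖)]
  have h4 : HasSum (fun α => 2 * ‖j α (A φ)‖ ^ 2 + 2 * ‖B α φ‖ ^ 2)
      (2 * ‖A φ‖ ^ 2 + (⟪φ, C φ⟫_ℂ).re) := (h1.mul_left 2).add h2
  have hS : Summable (fun α => ‖A (j α φ)‖ ^ 2) :=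
    Summable.of_nonneg_of_le (fun α => sq_nonneg _) h3 h4.summable
  calc ∑' α, ‖A (j α φ)‖ ^ 2
      ≤ ∑' α, (2 * ‖j α (A φ)‖ ^ 2 + 2 * ‖B α φ‖ ^ 2) :=
        Summable.tsum_le_tsum h3 hS h4.summable
    _ = 2 * ‖A φ‖ ^ 2 + (⟪φ, C φ⟫_ℂ).re := h4.tsum_eq
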